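/- Let (G, c) be a Max-2Lin_k instance with nonnegative edge weights x such that every inconsistent cycle of G has total weight at least 1, and suppose x_e < 1/2 for every edge e of G. If S is a set of vertices with d_x(u, v) ≤ 1/4 for every pair u, v ∈ S, then the induced subgraph G[S] contains no inconsistent cycle, and hence the instance restricted to G[S] is satisfiable. -/

import Mathlib

open SimpleGraph

/-- The weight of a walk: the sum of the weights of its edges, counted with multiplicity. -/
def walkWeight {V : Type*} {G : SimpleGraph V} (x : Sym2 V → ℝ) {u v : V}
    (p : G.Walk u v) : ℝ :=
  (p.edges.map x).sum

/-- The shortest-path distance between `u` and `v` induced by the edge weights `x`. -/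
noncomputable def wdist {V : Type*} (G : SimpleGraph V) (x : Sym2 V → ℝ) (u v : V) : ℝ :=
  sInf {r | ∃ p : G.Walk u v, walkWeight x p = r}

/-- The sum of the constants `c` along a walk: `c_{v_0 v_1} + c_{v_1 v_2} + ⋯ + c_{v_{l-1} v_l}`. -/
def walkSum {V : Type*} {k : ℕ} {G : SimpleGraph V} (c : V → V → ZMod k) {u v : V}
    (p : G.Walk u v) : ZMod k :=
  (p.darts.map (fun d => c d.fst d.snd)).sum


section Aux

variable {V : Type*} {k : ℕ} {G : SimpleGraph V}

@[simp] lemma walkSum_nil (c : V → V → ZMod k) (u : V) :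
    walkSum c (Walk.nil : G.Walk u u) = 0 := rfl

@[simp] lemma walkSum_cons (c : V → V → ZMod k) {u v w : V} (h : G.Adj u v) (p : G.Walk v w) :
    walkSum c (Walk.cons h p) = c u v + walkSum c p := by
  simp [walkSum]

lemma walkSum_append (c : V → V → ZMod k) {u v w : V} (p : G.Walk u v) (q : G.Walk v w) :
    walkSum c (p.append q) = walkSum c p + walkSum c q := by
  simp [walkSum, Walk.darts_append]

@[simp] lemma walkWeight_nil (x : Sym2 V → ℝ) (u : V) :
    walkWeight x (Walk.nil : G.Walk u u) = 0 := rfl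

@[simp] lemma walkWeight_cons (x : Sym2 V → ℝ) {u v w : V} (h : G.Adj u v) (p : G.Walk v w) :
    walkWeight x (Walk.cons h p) = x s(u, v) + walkWeight x p := by
  simp [walkWeight]

lemma walkWeight_append (x : Sym2 V → ℝ) {u v w : V} (p : G.Walk u v) (q : G.Walk v w) :
    walkWeight x (p.append q) = walkWeight x p + walkWeight x q := by
  simp [walkWeight, Walk.edges_append]

lemma walkWeight_reverse (x : Sym2 V → ℝ) {u v : V} (p : G.Walk u v) :
    walkWeight x p.reverse = walkWeight x p := by
  simp [walkWeight, Walk.edges_reverse, List.map_reverse, List.sum_reverse]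

lemma walkSum_reverse (c : V → V → ZMod k) (hc : ∀ a b, G.Adj a b → c b a = -c a b)
    {u v : V} (p : G.Walk u v) :
    walkSum c p.reverse = -walkSum c p := by
  induction p with
  | nil => simp
  | cons h p ih =>
    rw [Walk.reverse_cons, walkSum_append, ih, walkSum_cons, walkSum_nil, walkSum_cons,
      hc _ _ h]
    ring

lemma walkWeight_nonneg {x : Sym2 V → ℝ} (hx0 : ∀ e ∈ G.edgeSet, 0 ≤ x e)
    {u v : V} (p : G.Walk u v) : 0 ≤ walkWeight x p := by
  apply List.sum_nonneg
  intro r hr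
  obtain ⟨e, he, rfl⟩ := List.mem_map.mp hr
  exact hx0 e (p.edges_subset_edgeSet he)

lemma walkSum_rotate [DecidableEq V] (c : V → V → ZMod k) {u v : V} (p : G.Walk v v) (h : u ∈ p.support) :
    walkSum c (p.rotate u h) = walkSum c p := by
  unfold walkSum
  exact ((p.rotate_darts u h).perm.map _).sum_eq

lemma walkWeight_rotate [DecidableEq V] (x : Sym2 V → ℝ) {u v : V} (p : G.Walk v v) (h : u ∈ p.support) :
    walkWeight x (p.rotate u h) = walkWeight x p := by
  unfold walkWeight
  exact ((p.rotate_edges u h).perm.map _).sum_eq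

lemma walkSum_telescope (c : V → V → ZMod k) (g : V → ZMod k) {u v : V} (p : G.Walk u v) :
    (p.darts.map (fun d => g d.fst + c d.fst d.snd - g d.snd)).sum
      = g u + walkSum c p - g v := by
  induction p with
  | nil => simp
  | cons h p ih =>
    rw [Walk.darts_cons, List.map_cons, List.sum_cons, ih, walkSum_cons]
    ring

lemma closed_nodup_nil {v : V} (q : G.Walk v v) (h : q.support.Nodup) : q = Walk.nil := by
  cases q with
  | nil => rfl
  | cons h' q' =>
    exfalso
    rw [Walk.support_cons, List.nodup_cons] at h
    exact h.1 q'.end_mem_support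

lemma path_edge_length_one {u v : V} (q : G.Walk u v) (hnd : q.support.Nodup)
    (he : s(u, v) ∈ q.edges) : q.length = 1 := by
  cases q with
  | nil => simp at he
  | @cons _ w _ h' q' =>
    rw [Walk.support_cons, List.nodup_cons] at hnd
    rw [Walk.edges_cons, List.mem_cons] at he
    rcases he with he | he
    · rcases Sym2.eq_iff.mp he with ⟨-, h2⟩ | ⟨h1, h2⟩
      · subst h2
        rw [closed_nodup_nil q' hnd.2]
        simp
      · exact absurd (h1 ▸ h') (G.irrefl)
    · exact absurd (q'.fst_mem_support_of_mem_edges he) hnd.1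

end Aux

section Key

variable {V : Type*} {k : ℕ}

lemma key_closed [DecidableEq V] (G : SimpleGraph V) (c : V → V → ZMod k)
    (hc : ∀ u v, G.Adj u v → c v u = -c u v) (x : Sym2 V → ℝ)
    (hx0 : ∀ e ∈ G.edgeSet, 0 ≤ x e)
    (hincons : ∀ (v : V) (C : G.Walk v v), C.IsCycle → walkSum c C ≠ 0 →
      1 ≤ walkWeight x C) :
    ∀ (n : ℕ) {v : V} (p : G.Walk v v), p.length ≤ n → walkSum c p ≠ 0 →
      1 ≤ walkWeight x p := by
  intro n
  induction n using Nat.strong_induction_on with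
  | _ n ih =>
    intro v p hlen hsum
    cases p with
    | nil => simp at hsum
    | @cons _ w _ h q =>
      by_cases hnd : (Walk.cons h q).support.tail.Nodup
      · -- no repeated vertices: it is a cycle or short
        have hq : q.support.Nodup := by simpa using hnd
        by_cases he : s(v, w) ∈ q.edges
        · -- backtracking 2-cycle
          have hq1 : q.length = 1 :=
            path_edge_length_one q hq (Sym2.eq_swap ▸ he)
          cases q with
          | nil => simp at hq1
          | cons h' q' =>
            cases q' with
            | nil =>
              rw [walkSum_cons, walkSum_cons, walkSum_nil, hc _ _ h'] at hsum
              simp at hsum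
            | cons h'' q'' => simp [Walk.length_cons] at hq1
        · -- a genuine cycle
          have hcyc : (Walk.cons h q).IsCycle :=
            (Walk.cons_isCycle_iff q h).mpr ⟨(Walk.isPath_def q).mpr hq, he⟩
          exact hincons v _ hcyc hsum
      · -- repeated vertex: split and recurse
        set p : G.Walk v v := Walk.cons h q with hp
        obtain ⟨a, hdup⟩ := List.exists_duplicate_iff_not_nodup.mpr hnd
        have ha2 : 2 ≤ p.support.tail.count a := List.duplicate_iff_two_le_count.mp hdup
        have haS : a ∈ p.support := by
          rw [p.support_eq_cons]
          exact List.mem_cons_of_mem _ hdup.mem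
        set p' : G.Walk a a := p.rotate a haS with hp'
        have hperm : List.Perm p'.support.tail p.support.tail := (p.support_rotate a haS).perm
        have ha2' : 2 ≤ p'.support.tail.count a := by rw [hperm.count_eq]; exact ha2
        have hsum' : walkSum c p' = walkSum c p := walkSum_rotate c p haS
        have hw' : walkWeight x p' = walkWeight x p := walkWeight_rotate x p haS
        have hlen' : p'.length = p.length := by
          rw [← Walk.length_darts, ← Walk.length_darts]
          exact (p.rotate_darts a haS).perm.length_eq
        clear_value p'
        cases p' with
        | nil => simp at ha2'
        | @cons _ b _ h' q' =>
          have haq : a ∈ q'.support := by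
            rw [Walk.support_cons, List.tail_cons] at ha2'
            exact List.count_pos_iff.mp (by omega)
          set s : G.Walk a a := Walk.cons h' (q'.takeUntil a haq) with hs
          set t : G.Walk a a := q'.dropUntil a haq with ht
          have hsplit : q' = (q'.takeUntil a haq).append t := (q'.take_spec haq).symm
          have htlen : t.length ≠ 0 := by
            intro h0
            have : t = Walk.nil := (Walk.length_eq_zero_iff.mp h0).eq_nil
            rw [this, Walk.append_nil] at hsplit
            have := q'.count_support_takeUntil_eq_one haq
            rw [← hsplit] at this
            rw [Walk.support_cons, List.tail_cons] at ha2'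
            omega
          have hlens : s.length + t.length = p.length := by
            rw [← hlen', hs, Walk.length_cons]
            have := congr_arg Walk.length hsplit
            rw [Walk.length_append] at this
            rw [Walk.length_cons, this]
            omega
          have hq1 : walkSum c q' = walkSum c (q'.takeUntil a haq) + walkSum c t := by
            rw [congrArg (walkSum c) hsplit, walkSum_append]
          have hsums : walkSum c s + walkSum c t = walkSum c p := by
            rw [← hsum', hs, walkSum_cons, walkSum_cons, hq1]
            ring
          have hq2 : walkWeight x q' = walkWeight x (q'.takeUntil a haq) + walkWeight x t := by
            rw [congrArg (walkWeight x) hsplit, walkWeight_append]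
          have hws : walkWeight x s + walkWeight x t = walkWeight x p := by
            rw [← hw', hs, walkWeight_cons, walkWeight_cons, hq2]
            ring
          have hone : walkSum c s ≠ 0 ∨ walkSum c t ≠ 0 := by
            by_contra hcon
            push_neg at hcon
            rw [← hsums, hcon.1, hcon.2, add_zero] at hsum
            exact hsum rfl
          have hslen : s.length < n := by
            have : 1 ≤ t.length := by omega
            have : s.length < p.length := by omega
            omega
          have httlen : t.length < n := by
            have : 1 ≤ s.length := by rw [hs, Walk.length_cons]; omega
            omega
          rcases hone with hone | hone
          · have h1 := ih s.length hslen s le_rfl hone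
            have h2 := walkWeight_nonneg hx0 t
            linarith [hws]
          · have h1 := ih t.length httlen t le_rfl hone
            have h2 := walkWeight_nonneg hx0 s
            linarith [hws]

end Key

section MaxAux

lemma le_foldr_max {l : List ℝ} {a : ℝ} (h : a ∈ l) : a ≤ l.foldr max 0 := by
  induction l with
  | nil => simp at h
  | cons b l ih =>
    rcases List.mem_cons.mp h with rfl | h
    · exact le_max_left _ _
    · exact le_trans (ih h) (le_max_right _ _)

lemma foldr_max_lt {l : List ℝ} {C : ℝ} (h0 : 0 < C) (h : ∀ a ∈ l, a < C) :
    l.foldr max 0 < C := by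
  induction l with
  | nil => simpa
  | cons b l ih =>
    exact max_lt (h b (by simp)) (ih fun a ha => h a (List.mem_cons_of_mem _ ha))

end MaxAux

lemma no_incons_closed_in_S {V : Type*} [DecidableEq V] {k : ℕ} (G : SimpleGraph V)
    (c : V → V → ZMod k) (hc : ∀ u v, G.Adj u v → c v u = -c u v) (x : Sym2 V → ℝ)
    (hx : ∀ e ∈ G.edgeSet, 0 ≤ x e ∧ x e < 1 / 2)
    (hincons : ∀ (v : V) (C : G.Walk v v), C.IsCycle → walkSum c C ≠ 0 →
      1 ≤ walkWeight x C)
    (S : Set V) (hS : ∀ u ∈ S, ∀ v ∈ S, wdist G x u v ≤ 1 / 4)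
    {v : V} (hv : v ∈ S) (W : G.Walk v v) (hsupp : ∀ a ∈ W.support, a ∈ S) :
    walkSum c W = 0 := by
  classical
  by_contra hW
  set maxw := (W.edges.map x).foldr max 0 with hmaxw
  have hmax_lt : maxw < 1 / 2 := by
    apply foldr_max_lt (by norm_num)
    intro r hr
    obtain ⟨e, he, rfl⟩ := List.mem_map.mp hr
    exact (hx e (W.edges_subset_edgeSet he)).2
  set ε := (1 / 2 - maxw) / 4 with hε
  have hεpos : 0 < ε := by rw [hε]; linarith
  have hQ : ∀ a, a ∈ S → G.Reachable v a →
      ∃ q : G.Walk v a, walkWeight x q < 1 / 4 + ε := by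
    intro a ha hr
    have hne : {r | ∃ p : G.Walk v a, walkWeight x p = r}.Nonempty :=
      ⟨walkWeight x hr.some, hr.some, rfl⟩
    obtain ⟨r, ⟨q, rfl⟩, hlt⟩ := Real.lt_sInf_add_pos hne hεpos
    refine ⟨q, ?_⟩
    have h14 := hS v hv a ha
    unfold wdist at h14
    linarith
  choose Q hQw using hQ
  set g : V → ZMod k :=
    fun a => if h : a ∈ S ∧ G.Reachable v a then walkSum c (Q a h.1 h.2) else 0 with hg
  have htel := walkSum_telescope c g W
  have hex : ∃ d ∈ W.darts, g d.fst + c d.fst d.snd - g d.snd ≠ 0 := by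
    by_contra hcon
    push_neg at hcon
    have hzero : (W.darts.map (fun d => g d.fst + c d.fst d.snd - g d.snd)).sum = 0 := by
      apply List.sum_eq_zero
      intro r hr
      obtain ⟨d, hd, rfl⟩ := List.mem_map.mp hr
      exact hcon d hd
    rw [htel, add_sub_cancel_left] at hzero
    exact hW hzero
  obtain ⟨d, hd, hdne⟩ := hex
  have hf1 : d.fst ∈ W.support := W.dart_fst_mem_support_of_mem_darts hd
  have hf2 : d.snd ∈ W.support := W.dart_snd_mem_support_of_mem_darts hd
  have hfS : d.fst ∈ S := hsupp _ hf1
  have hsS : d.snd ∈ S := hsupp _ hf2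
  have hr1 : G.Reachable v d.fst := ⟨W.takeUntil _ hf1⟩
  have hr2 : G.Reachable v d.snd := ⟨W.takeUntil _ hf2⟩
  have hg1 : g d.fst = walkSum c (Q d.fst hfS hr1) := dif_pos ⟨hfS, hr1⟩
  have hg2 : g d.snd = walkSum c (Q d.snd hsS hr2) := dif_pos ⟨hsS, hr2⟩
  set T : G.Walk v v :=
    (Q d.fst hfS hr1).append
      ((Walk.cons d.adj Walk.nil).append (Q d.snd hsS hr2).reverse) with hT
  have hTsum : walkSum c T = g d.fst + c d.fst d.snd - g d.snd := by
    rw [hT, walkSum_append, walkSum_append, walkSum_cons, walkSum_nil,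
      walkSum_reverse c hc, hg1, hg2]
    ring
  have hT1 : 1 ≤ walkWeight x T :=
    key_closed G c hc x (fun e he => (hx e he).1) hincons T.length T le_rfl
      (by rw [hTsum]; exact hdne)
  have hTw : walkWeight x T = walkWeight x (Q d.fst hfS hr1) +
      (x s(d.fst, d.snd) + walkWeight x (Q d.snd hsS hr2)) := by
    rw [hT, walkWeight_append, walkWeight_append, walkWeight_cons, walkWeight_nil,
      walkWeight_reverse]
    ring
  have hedge : x s(d.fst, d.snd) ≤ maxw := by
    apply le_foldr_max
    apply List.mem_map_of_mem
    exact List.mem_map_of_mem hd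
  have hb1 := hQw d.fst hfS hr1
  have hb2 := hQw d.snd hsS hr2
  rw [hTw] at hT1
  rw [hε] at hb1 hb2
  linarith

lemma walkSum_map {V W : Type*} {k : ℕ} {G : SimpleGraph V} {G' : SimpleGraph W}
    (f : G →g G') (c : W → W → ZMod k) {u v : V} (p : G.Walk u v) :
    walkSum c (p.map f) = walkSum (fun a b => c (f a) (f b)) p := by
  induction p with
  | nil => rfl
  | cons h p ih => rw [Walk.map_cons, walkSum_cons, walkSum_cons, ih]

lemma walkSum_copy {V : Type*} {k : ℕ} {G : SimpleGraph V} (c : V → V → ZMod k)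
    {u v u' v' : V} (p : G.Walk u v) (hu : u = u') (hv : v = v') :
    walkSum c (p.copy hu hv) = walkSum c p := by
  subst hu; subst hv; rfl

/-- If every inconsistent cycle of a `Max-2Lin_k` instance has total weight at least 1,
`x_e < 1/2` for every edge, and `S` is a set of vertices with pairwise distances at most `1/4`,
then `G[S]` contains no inconsistent cycle and the instance restricted to `G[S]` is
satisfiable. -/
theorem stmt11 {V : Type*} [Fintype V] {k : ℕ} (hk : 1 ≤ k) (G : SimpleGraph V)
    (c : V → V → ZMod k) (hc : ∀ u v, G.Adj u v → c v u = -c u v)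
    (x : Sym2 V → ℝ)
    (hx : ∀ e ∈ G.edgeSet, 0 ≤ x e ∧ x e < 1 / 2)
    (hincons : ∀ (v : V) (C : G.Walk v v), C.IsCycle → walkSum c C ≠ 0 →
      1 ≤ walkWeight x C)
    (S : Set V) (hS : ∀ u ∈ S, ∀ v ∈ S, wdist G x u v ≤ 1 / 4) :
    (∀ (v : S) (C : (G.induce S).Walk v v), C.IsCycle →
        walkSum (fun a b : S => c a b) C = 0) ∧
      ∃ f : V → ZMod k, ∀ u v : V, u ∈ S → v ∈ S → G.Adj u v → f v - f u = c u v := by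
  classical
  have hM : ∀ (v : V), v ∈ S → ∀ (W : G.Walk v v), (∀ a ∈ W.support, a ∈ S) →
      walkSum c W = 0 :=
    fun v hv W hsupp => no_incons_closed_in_S G c hc x hx hincons S hS hv W hsupp
  set G' := G.induce S with hG'
  set ι : G' →g G := SimpleGraph.Hom.comap Subtype.val G with hι
  have hsupp_map : ∀ (a b : S) (W : G'.Walk a b) (e : V),
      e ∈ (W.map ι).support → e ∈ S := by
    intro a b W e he
    rw [Walk.support_map] at he
    obtain ⟨w, -, rfl⟩ := List.mem_map.mp he
    exact w.2
  constructor
  · intro v C _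
    have h0 := hM v v.2 (C.map ι) (hsupp_map v v C)
    have h0 := (walkSum_map ι c C).symm.trans h0
    exact h0
  · set rep : S → S := fun a => ((G'.connectedComponentMk a).out) with hrep
    have hrep_reach : ∀ a : S, G'.Reachable (rep a) a := by
      intro a
      have : G'.connectedComponentMk (rep a) = G'.connectedComponentMk a :=
        (G'.connectedComponentMk a).out_eq
      exact ConnectedComponent.exact this
    have P : ∀ a : S, G'.Walk (rep a) a := fun a => (hrep_reach a).some
    set g : S → ZMod k := fun a => walkSum (fun a b : S => c a b) (P a) with hgdef
    refine ⟨fun a => if h : a ∈ S then g ⟨a, h⟩ else 0, ?_⟩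
    intro u v hu hv huv
    have hadj : G'.Adj ⟨u, hu⟩ ⟨v, hv⟩ := huv
    have hrepeq : rep ⟨v, hv⟩ = rep ⟨u, hu⟩ := by
      have hcc := ConnectedComponent.sound (G := G') hadj.reachable
      simp only [hrep]
      exact congrArg Quot.out hcc.symm
    set W0 : G'.Walk (rep ⟨u, hu⟩) (rep ⟨u, hu⟩) :=
      (P ⟨u, hu⟩).append
        ((Walk.cons hadj Walk.nil).append ((P ⟨v, hv⟩).reverse.copy rfl hrepeq)) with hW0
    have h0 := hM (rep ⟨u, hu⟩).1 (rep ⟨u, hu⟩).2 (W0.map ι) (hsupp_map _ _ W0)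
    have h0 := (walkSum_map ι c W0).symm.trans h0
    have hc' : ∀ a b : S, G'.Adj a b →
        (fun a b : S => c (ι a) (ι b)) b a = -(fun a b : S => c (ι a) (ι b)) a b :=
      fun a b h => hc a b h
    rw [hW0, walkSum_append, walkSum_append, walkSum_cons, walkSum_nil,
      walkSum_copy, walkSum_reverse _ hc'] at h0
    have h0' : g ⟨u, hu⟩ + (c u v + 0 + -(g ⟨v, hv⟩)) = 0 := h0
    simp only [dif_pos hu, dif_pos hv]
    linear_combination -h0'
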